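/- Let Kₙ be the complete graph and r_BN its Baker-Norine rank. For every d ∈ ℤ^n: r_BN(d) = -1 + |{ i ∈ {0,…,deg(d)} : ∑_{j=1}^{n-2} ((dⱼ - d_{n-1} + i) mod n) ≤ deg(d) - i }|, where mod n takes values in {0,…,n-1}. (In particular r_BN(d) = -1 when deg(d) < 0.) -/

import Mathlib

open scoped BigOperators

/-- degree of a divisor -/
def deg {n : ℕ} (d : Fin n → ℤ) : ℤ := ∑ i, d i

/-- initially zero: vanishes for all sufficiently small degree -/
def InitiallyZero {n : ℕ} (f : (Fin n → ℤ) → ℤ) : Prop :=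
  ∃ a : ℤ, ∀ d, deg d ≤ a → f d = 0

/-- indicator vector of a finite set of coordinates -/
def eI {n : ℕ} (I : Finset (Fin n)) : Fin n → ℤ := fun i => if i ∈ I then 1 else 0

/-- standard basis vector -/
def stdB {n : ℕ} (i : Fin n) : Fin n → ℤ := fun j => if j = i then 1 else 0

/-- the Möbius operator 𝔪 -/
def mob {n : ℕ} (f : (Fin n → ℤ) → ℤ) : (Fin n → ℤ) → ℤ :=
  fun d => ∑ I : Finset (Fin n), (-1) ^ I.card * f (d - eI I)

/-- a modular function -/
def Modular {n : ℕ} (h : (Fin n → ℤ) → ℤ) : Prop := ∀ d, mob h d = 0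

/-- L¹ distance (as a natural number) from `d` to the set `N` -/
noncomputable def distTo {n : ℕ} (N : Set (Fin n → ℤ)) (d : Fin n → ℤ) : ℕ :=
  sInf {k : ℕ | ∃ d' ∈ N, ∑ i, (d i - d' i).natAbs = k}

/-- equivalence modulo the image of the Laplacian of the complete graph Kₙ:
the Laplacian sends `x` to `fun i => n * x i - ∑ j, x j`. -/
def lapEquiv (n : ℕ) (d d' : Fin n → ℤ) : Prop :=
  ∃ x : Fin n → ℤ, ∀ i, d i - d' i = (n : ℤ) * x i - ∑ j, x j

/-- divisors of Kₙ not equivalent to an effective divisor -/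
def NKn (n : ℕ) : Set (Fin n → ℤ) :=
  {d | ¬ ∃ d' : Fin n → ℤ, (∀ i, 0 ≤ d' i) ∧ lapEquiv n d d'}

/-- the Baker–Norine rank of the complete graph Kₙ -/
noncomputable def rBN (n : ℕ) (d : Fin n → ℤ) : ℤ :=
  (distTo (NKn n) d : ℤ) - 1

namespace CLB
variable {n : ℕ}

def Ff (hn : 2 ≤ n) (d : Fin n → ℤ) (i : ℤ) : ℤ :=
  ∑ j ∈ Finset.univ.filter (fun j : Fin n => (j : ℕ) < n - 2),
    ((d j - d ⟨n - 2, Nat.sub_lt_self (by norm_num) hn⟩ + i) % n)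

def Sset (hn : 2 ≤ n) (d : Fin n → ℤ) : Finset ℕ :=
  (Finset.range (deg d + 1).toNat).filter (fun i : ℕ => Ff hn d (i : ℤ) ≤ deg d - (i : ℤ))

lemma npos (hn : 2 ≤ n) : (0:ℤ) < (n:ℤ) := by exact_mod_cast Nat.lt_of_lt_of_le (by norm_num) hn

lemma emod_nonneg' (hn : 2 ≤ n) (x : ℤ) : 0 ≤ x % (n:ℤ) :=
  Int.emod_nonneg x (by positivity)

lemma emod_lt' (hn : 2 ≤ n) (x : ℤ) : x % (n:ℤ) < (n:ℤ) :=
  Int.emod_lt_of_pos x (npos hn)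

lemma Ff_nonneg (hn : 2 ≤ n) (d : Fin n → ℤ) (i : ℤ) : 0 ≤ Ff hn d i :=
  Finset.sum_nonneg fun j _ => emod_nonneg' hn _

lemma Ff_congr (hn : 2 ≤ n) (d : Fin n → ℤ) {i i' : ℤ} (h : (n:ℤ) ∣ i' - i) :
    Ff hn d i = Ff hn d i' := by
  unfold Ff
  refine Finset.sum_congr rfl fun j _ => ?_
  rw [Int.emod_eq_emod_iff_emod_sub_eq_zero]
  have : d j - d ⟨n - 2, Nat.sub_lt_self (by norm_num) hn⟩ + i - (d j - d ⟨n - 2, Nat.sub_lt_self (by norm_num) hn⟩ + i') = -(i' - i) := by ring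
  rw [this]
  exact Int.emod_eq_zero_of_dvd (dvd_neg.mpr h)

lemma card_small (hn : 2 ≤ n) :
    (Finset.univ.filter (fun j : Fin n => (j:ℕ) < n-2)).card = n - 2 := by
  have : (Finset.univ.filter (fun j : Fin n => (j:ℕ) < n-2)) =
      Finset.map (Fin.castLEEmb (by omega : n-2 ≤ n)) Finset.univ := by
    ext j
    simp only [Finset.mem_filter, Finset.mem_univ, true_and, Finset.mem_map]
    constructor
    · intro hj; exact ⟨⟨j, hj⟩, rfl⟩
    · rintro ⟨k, rfl⟩; simpa using k.2
  rw [this]; simp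

lemma Ff_mod (hn : 2 ≤ n) (d : Fin n → ℤ) (i i' : ℤ) :
    (n:ℤ) ∣ (Ff hn d i' - Ff hn d i - ((n:ℤ)-2) * (i' - i)) := by
  have hc : ((n:ℤ) - 2) = ((n - 2 : ℕ) : ℤ) := by push_cast [hn]; ring
  rw [hc]
  have key : ∀ j ∈ Finset.univ.filter (fun j : Fin n => (j:ℕ) < n-2),
      (n:ℤ) ∣ ((d j - d ⟨n - 2, Nat.sub_lt_self (by norm_num) hn⟩ + i') % n - (d j - d ⟨n - 2, Nat.sub_lt_self (by norm_num) hn⟩ + i) % n - (i' - i)) := by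
    intro j _
    set a := d j - d ⟨n - 2, Nat.sub_lt_self (by norm_num) hn⟩ + i' with ha
    set b := d j - d ⟨n - 2, Nat.sub_lt_self (by norm_num) hn⟩ + i with hb
    have h1 : a % (n:ℤ) ≡ a [ZMOD (n:ℤ)] := Int.emod_emod_of_dvd a dvd_rfl
    have h2 : b % (n:ℤ) ≡ b [ZMOD (n:ℤ)] := Int.emod_emod_of_dvd b dvd_rfl
    have h3 : a % (n:ℤ) - b % (n:ℤ) - (i' - i) ≡ a - b - (i' - i) [ZMOD (n:ℤ)] :=
      (h1.sub h2).sub (Int.ModEq.refl _)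
    have h4 : a - b - (i' - i) = 0 := by rw [ha, hb]; ring
    rw [h4] at h3
    exact (Int.modEq_zero_iff_dvd).mp h3
  have hsum := Finset.dvd_sum key
  have heq : Ff hn d i' - Ff hn d i - ((n - 2 : ℕ) : ℤ) * (i' - i) =
      ∑ j ∈ Finset.univ.filter (fun j : Fin n => (j:ℕ) < n-2),
        ((d j - d ⟨n - 2, Nat.sub_lt_self (by norm_num) hn⟩ + i') % n - (d j - d ⟨n - 2, Nat.sub_lt_self (by norm_num) hn⟩ + i) % n - (i' - i)) := by
    rw [Finset.sum_sub_distrib, Finset.sum_sub_distrib, Finset.sum_const, card_small hn,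
      nsmul_eq_mul]
    rfl
  rw [heq]
  exact hsum

lemma mem_Sset (hn : 2 ≤ n) {d : Fin n → ℤ} {i : ℕ} :
    i ∈ Sset hn d ↔ Ff hn d (i : ℤ) ≤ deg d - (i : ℤ) := by
  unfold Sset
  rw [Finset.mem_filter, Finset.mem_range]
  constructor
  · exact fun h => h.2
  · intro h
    refine ⟨?_, h⟩
    have := Ff_nonneg hn d (i:ℤ)
    omega

lemma stdB_apply {v j : Fin n} : stdB v j = if j = v then 1 else 0 := rfl

lemma deg_sub_stdB (d : Fin n → ℤ) (v : Fin n) : deg (d - stdB v) = deg d - 1 := by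
  unfold deg
  simp only [Pi.sub_apply]
  rw [Finset.sum_sub_distrib]
  simp [stdB]

lemma emod_sub_one (hn : 2 ≤ n) (x : ℤ) :
    (x - 1) % n = x % n - 1 + (if x % (n:ℤ) = 0 then (n:ℤ) else 0) := by
  have h0 := emod_nonneg' hn x
  have h1 := emod_lt' hn x
  have hstep : (x - 1) % (n:ℤ) = (x % n - 1) % n := by
    rw [Int.sub_emod x 1, Int.emod_eq_of_lt (by norm_num) (by exact_mod_cast by omega : (1:ℤ) < n)]
  by_cases h : x % (n:ℤ) = 0
  · rw [if_pos h, hstep, h]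
    have h2 : ((0:ℤ) - 1) % n = ((n:ℤ) - 1) % n := by
      rw [Int.emod_eq_emod_iff_emod_sub_eq_zero]
      have : (0:ℤ) - 1 - ((n:ℤ) - 1) = -1 * n := by ring
      rw [this, Int.mul_emod_left]
    rw [h2, Int.emod_eq_of_lt (by omega) (by omega)]
    ring
  · rw [if_neg h, hstep, Int.emod_eq_of_lt (by omega) (by omega)]
    ring

lemma Ff_shift_nu (hn : 2 ≤ n) (d : Fin n → ℤ) (i : ℤ) :
    Ff hn (d - stdB ⟨n-2, Nat.sub_lt_self (by norm_num) hn⟩) i = Ff hn d (i + 1) := by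
  unfold Ff
  refine Finset.sum_congr rfl fun j hj => ?_
  rw [Finset.mem_filter] at hj
  have hjne : j ≠ (⟨n-2, Nat.sub_lt_self (by norm_num) hn⟩ : Fin n) := by
    intro h; have := congrArg Fin.val h; simp at this; omega
  have h1 : (d - stdB (⟨n-2, Nat.sub_lt_self (by norm_num) hn⟩ : Fin n)) j = d j := by
    simp [stdB, Pi.sub_apply, hjne]
  have h2 : (d - stdB (⟨n-2, Nat.sub_lt_self (by norm_num) hn⟩ : Fin n)) ⟨n-2, Nat.sub_lt_self (by norm_num) hn⟩ = d ⟨n-2, Nat.sub_lt_self (by norm_num) hn⟩ - 1 := by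
    simp [stdB, Pi.sub_apply]
  rw [h1, h2]
  ring_nf

lemma Ff_shift_last (hn : 2 ≤ n) (d : Fin n → ℤ) (i : ℤ) :
    Ff hn (d - stdB ⟨n-1, by omega⟩) i = Ff hn d i := by
  unfold Ff
  refine Finset.sum_congr rfl fun j hj => ?_
  rw [Finset.mem_filter] at hj
  have hjne : j ≠ (⟨n-1, by omega⟩ : Fin n) := by
    intro h; have := congrArg Fin.val h; simp at this; omega
  have hnune : (⟨n-2, Nat.sub_lt_self (by norm_num) hn⟩ : Fin n) ≠ (⟨n-1, by omega⟩ : Fin n) := by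
    intro h; rw [Fin.mk.injEq] at h; omega
  have h1 : (d - stdB (⟨n-1, by omega⟩ : Fin n)) j = d j := by
    simp [stdB, Pi.sub_apply, hjne]
  have h2 : (d - stdB (⟨n-1, by omega⟩ : Fin n)) ⟨n-2, Nat.sub_lt_self (by norm_num) hn⟩ = d ⟨n-2, Nat.sub_lt_self (by norm_num) hn⟩ := by
    simp [stdB, Pi.sub_apply, hnune]
  rw [h1, h2]

lemma Ff_shift_j (hn : 2 ≤ n) (d : Fin n → ℤ) {j₀ : Fin n} (hj : (j₀:ℕ) < n-2) (i : ℤ) :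
    Ff hn (d - stdB j₀) i =
      Ff hn d i - 1 + (if (d j₀ - d ⟨n-2, Nat.sub_lt_self (by norm_num) hn⟩ + i) % (n:ℤ) = 0 then (n:ℤ) else 0) := by
  have hmem : j₀ ∈ Finset.univ.filter (fun j : Fin n => (j:ℕ) < n-2) := by
    simp [hj]
  have hnune : (⟨n-2, Nat.sub_lt_self (by norm_num) hn⟩ : Fin n) ≠ j₀ := by
    intro h
    have : n - 2 = (j₀:ℕ) := congrArg Fin.val h
    omega
  unfold Ff
  rw [← Finset.sum_erase_add _ _ hmem, ← Finset.sum_erase_add _ _ hmem]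
  have hrest : ∀ j ∈ (Finset.univ.filter (fun j : Fin n => (j:ℕ) < n-2)).erase j₀,
      ((d - stdB j₀) j - (d - stdB j₀) ⟨n-2, Nat.sub_lt_self (by norm_num) hn⟩ + i) % (n:ℤ)
        = (d j - d ⟨n-2, Nat.sub_lt_self (by norm_num) hn⟩ + i) % (n:ℤ) := by
    intro j hjm
    rw [Finset.mem_erase] at hjm
    simp [stdB, Pi.sub_apply, hjm.1, hnune]
  rw [Finset.sum_congr rfl hrest]
  have hterm : ((d - stdB j₀) j₀ - (d - stdB j₀) ⟨n-2, Nat.sub_lt_self (by norm_num) hn⟩ + i) % (n:ℤ)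
      = ((d j₀ - d ⟨n-2, Nat.sub_lt_self (by norm_num) hn⟩ + i) - 1) % (n:ℤ) := by
    simp [stdB, Pi.sub_apply, hnune]
    ring_nf
  rw [hterm, emod_sub_one hn]
  ring

lemma mem_S_nu (hn : 2 ≤ n) {d : Fin n → ℤ} (i : ℕ) :
    i ∈ Sset hn (d - stdB ⟨n-2, Nat.sub_lt_self (by norm_num) hn⟩) ↔ (i+1) ∈ Sset hn d := by
  rw [mem_Sset, mem_Sset, Ff_shift_nu, deg_sub_stdB]
  push_cast
  constructor <;> intro h <;> omega

lemma mem_S_last (hn : 2 ≤ n) {d : Fin n → ℤ} (i : ℕ) :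
    i ∈ Sset hn (d - stdB ⟨n-1, by omega⟩) ↔ Ff hn d (i:ℤ) ≤ deg d - 1 - (i:ℤ) := by
  rw [mem_Sset, Ff_shift_last, deg_sub_stdB]

lemma mem_S_j (hn : 2 ≤ n) {d : Fin n → ℤ} {j₀ : Fin n} (hj : (j₀:ℕ) < n-2) (i : ℕ) :
    i ∈ Sset hn (d - stdB j₀) ↔
      Ff hn d (i:ℤ) + (if (d j₀ - d ⟨n-2, Nat.sub_lt_self (by norm_num) hn⟩ + (i:ℤ)) % (n:ℤ) = 0 then (n:ℤ) else 0)
        ≤ deg d - (i:ℤ) := by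
  rw [mem_Sset, Ff_shift_j hn d hj, deg_sub_stdB]
  constructor <;> intro h <;> omega

lemma tight_unique (hn : 2 ≤ n) (d : Fin n → ℤ) {i i' : ℕ}
    (h : Ff hn d (i:ℤ) = deg d - (i:ℤ)) (h' : Ff hn d (i':ℤ) = deg d - (i':ℤ)) : i = i' := by
  obtain ⟨t, ht2⟩ := Ff_mod hn d (i:ℤ) (i':ℤ)
  rw [h, h'] at ht2
  have hd : (n:ℤ) ∣ (i':ℤ) - (i:ℤ) := ⟨((i':ℤ) - i) + t, by linear_combination ht2⟩
  have := Ff_congr hn d hd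
  rw [h, h'] at this
  omega

lemma j_unique (hn : 2 ≤ n) (d : Fin n → ℤ) {j₀ : Fin n} {i i' : ℕ}
    (hi : i ∈ Sset hn d) (hi' : i' ∈ Sset hn d)
    (hT : (d j₀ - d ⟨n-2, Nat.sub_lt_self (by norm_num) hn⟩ + (i:ℤ)) % (n:ℤ) = 0)
    (hT' : (d j₀ - d ⟨n-2, Nat.sub_lt_self (by norm_num) hn⟩ + (i':ℤ)) % (n:ℤ) = 0)
    (hP : deg d - (i:ℤ) < Ff hn d (i:ℤ) + n)
    (hP' : deg d - (i':ℤ) < Ff hn d (i':ℤ) + n) : i = i' := by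
  have d1 := Int.dvd_of_emod_eq_zero hT
  have d2 := Int.dvd_of_emod_eq_zero hT'
  have hd : (n:ℤ) ∣ (i':ℤ) - (i:ℤ) := by
    have := Int.dvd_sub d2 d1
    simpa using this
  have hFeq := Ff_congr hn d hd
  rw [mem_Sset] at hi hi'
  obtain ⟨t, ht⟩ := hd
  have hn' := npos hn
  -- (Ff i + i) and (Ff i' + i') both lie in (deg d - n, deg d]
  have e1 : deg d - (n:ℤ) < Ff hn d (i:ℤ) + (i:ℤ) := by omega
  have e2 : Ff hn d (i:ℤ) + (i:ℤ) ≤ deg d := by omega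
  have e3 : deg d - (n:ℤ) < Ff hn d (i':ℤ) + (i':ℤ) := by omega
  have e4 : Ff hn d (i':ℤ) + (i':ℤ) ≤ deg d := by omega
  rw [← hFeq] at e3 e4
  -- i' - i = n * t with |i' - i| < n
  have : t = 0 := by
    rcases lt_trichotomy t 0 with h | h | h
    · nlinarith
    · exact h
    · nlinarith
  rw [this, mul_zero] at ht
  omega

lemma vertex_cases (hn : 2 ≤ n) (v : Fin n) :
    ((v:ℕ) < n-2) ∨ v = (⟨n-2, Nat.sub_lt_self (by norm_num) hn⟩ : Fin n) ∨ v = (⟨n-1, by omega⟩ : Fin n) := by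
  have h2 := v.2
  rcases Nat.lt_trichotomy (v:ℕ) (n-2) with h | h | h
  · exact Or.inl h
  · exact Or.inr (Or.inl (by apply Fin.ext; simpa using h))
  · exact Or.inr (Or.inr (by apply Fin.ext; simp; omega))

lemma B1 (hn : 2 ≤ n) (d : Fin n → ℤ) (v : Fin n) :
    (Sset hn d).card ≤ (Sset hn (d - stdB v)).card + 1 := by
  rcases vertex_cases hn v with hj | hv | hv
  · -- vertex j₀ < n-2
    by_cases hex : ∃ i ∈ Sset hn d, (d v - d ⟨n-2, Nat.sub_lt_self (by norm_num) hn⟩ + (i:ℤ)) % (n:ℤ) = 0 ∧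
        deg d - (i:ℤ) < Ff hn d (i:ℤ) + n
    · obtain ⟨i₁, hi₁, hT₁, hP₁⟩ := hex
      have hsub : Sset hn d ⊆ insert i₁ (Sset hn (d - stdB v)) := by
        intro i hi
        rw [Finset.mem_insert]
        by_cases hT : (d v - d ⟨n-2, Nat.sub_lt_self (by norm_num) hn⟩ + (i:ℤ)) % (n:ℤ) = 0
        · by_cases hP : deg d - (i:ℤ) < Ff hn d (i:ℤ) + n
          · exact Or.inl (j_unique hn d hi hi₁ hT hT₁ hP hP₁)
          · refine Or.inr ((mem_S_j hn hj i).mpr ?_)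
            rw [if_pos hT]; omega
        · refine Or.inr ((mem_S_j hn hj i).mpr ?_)
          rw [if_neg hT]
          rw [mem_Sset] at hi; omega
      calc (Sset hn d).card ≤ (insert i₁ (Sset hn (d - stdB v))).card := Finset.card_le_card hsub
        _ ≤ (Sset hn (d - stdB v)).card + 1 := Finset.card_insert_le _ _
    · have hsub : Sset hn d ⊆ Sset hn (d - stdB v) := by
        intro i hi
        refine (mem_S_j hn hj i).mpr ?_
        have hi' := (mem_Sset hn).mp hi
        by_cases hT : (d v - d ⟨n-2, Nat.sub_lt_self (by norm_num) hn⟩ + (i:ℤ)) % (n:ℤ) = 0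
        · have : ¬ (deg d - (i:ℤ) < Ff hn d (i:ℤ) + n) := fun hP => hex ⟨i, hi, hT, hP⟩
          rw [if_pos hT]; omega
        · rw [if_neg hT]; omega
      exact le_trans (Finset.card_le_card hsub) (Nat.le_succ _)
  · -- vertex ν = n-2
    subst hv
    have hsub : Sset hn d ⊆ insert 0 (Finset.image (· + 1) (Sset hn (d - stdB ⟨n-2, Nat.sub_lt_self (by norm_num) hn⟩))) := by
      intro i hi
      rw [Finset.mem_insert]
      rcases Nat.eq_zero_or_pos i with h0 | hpos
      · exact Or.inl h0
      · refine Or.inr (Finset.mem_image.mpr ⟨i - 1, ?_, by omega⟩)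
        rw [mem_S_nu hn]
        have : i - 1 + 1 = i := by omega
        rw [this]; exact hi
    calc (Sset hn d).card
        ≤ (insert 0 (Finset.image (· + 1) (Sset hn (d - stdB ⟨n-2, Nat.sub_lt_self (by norm_num) hn⟩)))).card :=
          Finset.card_le_card hsub
      _ ≤ (Finset.image (· + 1) (Sset hn (d - stdB ⟨n-2, Nat.sub_lt_self (by norm_num) hn⟩))).card + 1 :=
          Finset.card_insert_le _ _
      _ ≤ (Sset hn (d - stdB ⟨n-2, Nat.sub_lt_self (by norm_num) hn⟩)).card + 1 := by
          exact Nat.add_le_add_right (Finset.card_image_le) 1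
  · -- vertex last = n-1
    subst hv
    by_cases hex : ∃ i ∈ Sset hn d, Ff hn d (i:ℤ) = deg d - (i:ℤ)
    · obtain ⟨i₁, hi₁, ht₁⟩ := hex
      have hsub : Sset hn d ⊆ insert i₁ (Sset hn (d - stdB ⟨n-1, by omega⟩)) := by
        intro i hi
        rw [Finset.mem_insert]
        have hi' := (mem_Sset hn).mp hi
        by_cases ht : Ff hn d (i:ℤ) = deg d - (i:ℤ)
        · exact Or.inl (tight_unique hn d ht ht₁)
        · exact Or.inr ((mem_S_last hn i).mpr (by omega))
      calc (Sset hn d).card ≤ _ := Finset.card_le_card hsub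
        _ ≤ (Sset hn (d - stdB ⟨n-1, by omega⟩)).card + 1 := Finset.card_insert_le _ _
    · have hsub : Sset hn d ⊆ Sset hn (d - stdB ⟨n-1, by omega⟩) := by
        intro i hi
        have hi' := (mem_Sset hn).mp hi
        have : ¬ Ff hn d (i:ℤ) = deg d - (i:ℤ) := fun h => hex ⟨i, hi, h⟩
        exact (mem_S_last hn i).mpr (by omega)
      exact le_trans (Finset.card_le_card hsub) (Nat.le_succ _)

lemma Ff_sub_one (hn : 2 ≤ n) (d : Fin n → ℤ) (i : ℤ) :
    Ff hn d (i - 1) = Ff hn d i - ((n:ℤ)-2) +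
      ∑ j ∈ Finset.univ.filter (fun j : Fin n => (j : ℕ) < n - 2),
        (if (d j - d ⟨n-2, Nat.sub_lt_self (by norm_num) hn⟩ + i) % (n:ℤ) = 0 then (n:ℤ) else 0) := by
  have hterm : ∀ j ∈ Finset.univ.filter (fun j : Fin n => (j : ℕ) < n - 2),
      (d j - d ⟨n-2, Nat.sub_lt_self (by norm_num) hn⟩ + (i-1)) % (n:ℤ) =
        (d j - d ⟨n-2, Nat.sub_lt_self (by norm_num) hn⟩ + i) % (n:ℤ) - 1 +
          (if (d j - d ⟨n-2, Nat.sub_lt_self (by norm_num) hn⟩ + i) % (n:ℤ) = 0 then (n:ℤ) else 0) := by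
    intro j _
    have : d j - d ⟨n-2, Nat.sub_lt_self (by norm_num) hn⟩ + (i-1) = (d j - d ⟨n-2, Nat.sub_lt_self (by norm_num) hn⟩ + i) - 1 := by ring
    rw [this, emod_sub_one hn]
  unfold Ff
  rw [Finset.sum_congr rfl hterm, Finset.sum_add_distrib, Finset.sum_sub_distrib,
    Finset.sum_const, card_small hn, nsmul_eq_mul, mul_one]
  have : ((n:ℤ) - 2) = ((n-2 : ℕ) : ℤ) := by push_cast [hn]; ring
  rw [this]

lemma B2 (hn : 2 ≤ n) (d : Fin n → ℤ) (hS : (Sset hn d).Nonempty) :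
    ∃ v : Fin n, (Sset hn (d - stdB v)).card < (Sset hn d).card := by
  by_cases h0 : 0 ∈ Sset hn d
  · -- remove a chip at vertex n-2
    refine ⟨⟨n-2, Nat.sub_lt_self (by norm_num) hn⟩, ?_⟩
    have hmap : ∀ i ∈ Sset hn (d - stdB ⟨n-2, Nat.sub_lt_self (by norm_num) hn⟩),
        i + 1 ∈ (Sset hn d).erase 0 := by
      intro i hi
      rw [Finset.mem_erase]
      exact ⟨by omega, (mem_S_nu hn i).mp hi⟩
    have hinj : Set.InjOn (· + 1) (Sset hn (d - stdB ⟨n-2, Nat.sub_lt_self (by norm_num) hn⟩)) := by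
      intro a _ b _ hab
      simpa using hab
    have hcard := Finset.card_le_card_of_injOn _ hmap hinj
    have : ((Sset hn d).erase 0).card = (Sset hn d).card - 1 := Finset.card_erase_of_mem h0
    have hpos : 1 ≤ (Sset hn d).card := Finset.card_pos.mpr ⟨0, h0⟩
    omega
  · -- min element i₀ ≥ 1
    set i₀ := (Sset hn d).min' hS with hi₀def
    have hi₀mem : i₀ ∈ Sset hn d := (Sset hn d).min'_mem hS
    have hi₀pos : 1 ≤ i₀ := by
      rcases Nat.eq_zero_or_pos i₀ with h | h
      · exact absurd (h ▸ hi₀mem) h0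
      · exact h
    have hprev : i₀ - 1 ∉ Sset hn d := by
      intro hmem
      have := (Sset hn d).min'_le _ hmem
      omega
    have hprev' : ¬ (Ff hn d ((i₀:ℤ) - 1) ≤ deg d - ((i₀:ℤ) - 1)) := by
      intro h
      apply hprev
      rw [mem_Sset]
      have hc : ((i₀ - 1 : ℕ) : ℤ) = (i₀ : ℤ) - 1 := by omega
      rw [hc]
      exact h
    have hi₀S := (mem_Sset hn).mp hi₀mem
    -- find j₀ with (d j₀ - d ν + i₀) % n = 0
    have hex : ∃ j₀ ∈ Finset.univ.filter (fun j : Fin n => (j : ℕ) < n - 2),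
        (d j₀ - d ⟨n-2, Nat.sub_lt_self (by norm_num) hn⟩ + (i₀:ℤ)) % (n:ℤ) = 0 := by
      by_contra hno
      push_neg at hno
      have hzero : ∑ j ∈ Finset.univ.filter (fun j : Fin n => (j : ℕ) < n - 2),
          (if (d j - d ⟨n-2, Nat.sub_lt_self (by norm_num) hn⟩ + (i₀:ℤ)) % (n:ℤ) = 0 then (n:ℤ) else 0) = 0 :=
        Finset.sum_eq_zero fun j hj => if_neg (hno j hj)
      have := Ff_sub_one hn d (i₀:ℤ)
      rw [hzero, add_zero] at this
      rw [this] at hprev'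
      have hn2 : (2:ℤ) ≤ (n:ℤ) := by exact_mod_cast hn
      omega
    obtain ⟨j₀, hj₀mem, hT₀⟩ := hex
    have hj₀ : (j₀:ℕ) < n-2 := by
      simpa using hj₀mem
    refine ⟨j₀, ?_⟩
    -- the set R of elements of S in the residue class
    set R := (Sset hn d).filter
      (fun i : ℕ => (d j₀ - d ⟨n-2, Nat.sub_lt_self (by norm_num) hn⟩ + (i:ℤ)) % (n:ℤ) = 0) with hRdef
    have hRne : R.Nonempty := ⟨i₀, Finset.mem_filter.mpr ⟨hi₀mem, hT₀⟩⟩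
    set istar := R.max' hRne with histardef
    have histar : istar ∈ R := R.max'_mem hRne
    rw [Finset.mem_filter] at histar
    obtain ⟨histarS, hTstar⟩ := histar
    -- istar not in the new set
    have hnotin : istar ∉ Sset hn (d - stdB j₀) := by
      intro hmem
      rw [mem_S_j hn hj₀, if_pos hTstar] at hmem
      -- then istar + n ∈ R, contradicting maximality
      have hmem2 : istar + n ∈ R := by
        rw [hRdef, Finset.mem_filter]
        constructor
        · rw [mem_Sset]
          have hFeq : Ff hn d ((istar + n : ℕ) : ℤ) = Ff hn d (istar : ℤ) := by
            refine (Ff_congr hn d ?_).symm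
            push_cast
            exact ⟨1, by ring⟩
          rw [hFeq]
          push_cast
          omega
        · push_cast
          have : d j₀ - d ⟨n-2, Nat.sub_lt_self (by norm_num) hn⟩ + ((istar:ℤ) + (n:ℤ)) =
              (d j₀ - d ⟨n-2, Nat.sub_lt_self (by norm_num) hn⟩ + (istar:ℤ)) + 1 * (n:ℤ) := by ring
          rw [this, Int.add_mul_emod_self_right]
          exact hTstar
      have := R.le_max' _ hmem2
      omega
    have hsub : Sset hn (d - stdB j₀) ⊆ (Sset hn d).erase istar := by
      intro i hi
      rw [Finset.mem_erase]
      have hi' := (mem_S_j hn hj₀ i).mp hi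
      constructor
      · intro h; subst h; exact hnotin hi
      · rw [mem_Sset]
        by_cases hT : (d j₀ - d ⟨n-2, Nat.sub_lt_self (by norm_num) hn⟩ + (i:ℤ)) % (n:ℤ) = 0
        · rw [if_pos hT] at hi'
          have := npos hn
          omega
        · rw [if_neg hT] at hi'
          omega
    have hcard := Finset.card_le_card hsub
    have : ((Sset hn d).erase istar).card = (Sset hn d).card - 1 :=
      Finset.card_erase_of_mem histarS
    have hpos : 1 ≤ (Sset hn d).card := Finset.card_pos.mpr ⟨istar, histarS⟩
    omega

lemma notN_unfold (d : Fin n → ℤ) :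
    d ∉ NKn n ↔ ∃ d' : Fin n → ℤ, (∀ i, 0 ≤ d' i) ∧ lapEquiv n d d' := by
  simp [NKn]

lemma notN_iff (hn : 2 ≤ n) (d : Fin n → ℤ) :
    d ∉ NKn n ↔ ∃ c : ℤ, ∑ j, ((d j - c) % (n:ℤ)) ≤ deg d := by
  rw [notN_unfold]
  constructor
  · rintro ⟨d', hd', x, hx⟩
    refine ⟨-∑ j, x j, ?_⟩
    have hdeg : deg d' = deg d := by
      have : ∑ i, (d i - d' i) = 0 := by
        rw [Finset.sum_congr rfl (fun i _ => hx i), Finset.sum_sub_distrib,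
          Finset.sum_const, Finset.card_univ, Fintype.card_fin, nsmul_eq_mul,
          ← Finset.mul_sum]
        ring
      rw [Finset.sum_sub_distrib] at this
      unfold deg
      omega
    have hterm : ∀ i, (d i - -∑ j, x j) % (n:ℤ) ≤ d' i := by
      intro i
      have h1 : d i - -∑ j, x j = d' i + (n:ℤ) * x i := by
        have := hx i; omega
      have h2 : (d' i + (n:ℤ) * x i) % (n:ℤ) = d' i % (n:ℤ) := by
        simp [Int.add_mul_emod_self_left]
      rw [h1, h2]
      have h3 : 0 ≤ d' i / (n:ℤ) := Int.ediv_nonneg (hd' i) (by exact_mod_cast Nat.zero_le n)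
      have h4 := Int.mul_ediv_add_emod (d' i) (n:ℤ)
      have h5 := npos hn
      nlinarith
    calc ∑ j, ((d j - -∑ j, x j) % (n:ℤ)) ≤ ∑ j, d' j := Finset.sum_le_sum fun j _ => hterm j
      _ = deg d := hdeg
  · rintro ⟨c, hc⟩
    set r : Fin n → ℤ := fun j => (d j - c) % (n:ℤ) with hr
    set q : Fin n → ℤ := fun j => (d j - c) / (n:ℤ) with hq
    have hqr : ∀ j, d j - c = (n:ℤ) * q j + r j := fun j => (Int.mul_ediv_add_emod _ _).symm
    have hsum : deg d - n * c = (n:ℤ) * ∑ j, q j + ∑ j, r j := by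
      have : ∑ j, (d j - c) = ∑ j, ((n:ℤ) * q j + r j) :=
        Finset.sum_congr rfl fun j _ => hqr j
      rw [Finset.sum_sub_distrib, Finset.sum_add_distrib, Finset.sum_const,
        Finset.card_univ, Fintype.card_fin, nsmul_eq_mul, ← Finset.mul_sum] at this
      unfold deg
      omega
    set t : ℤ := (∑ j, q j) + c with htdef
    have hnt : deg d - ∑ j, r j = (n:ℤ) * t := by rw [htdef, mul_add]; omega
    have ht0 : 0 ≤ t := by
      have h5 := npos hn
      nlinarith [hc, hnt]
    set d' : Fin n → ℤ := fun j => r j + (if j = (⟨0, by omega⟩ : Fin n) then (n:ℤ) * t else 0)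
      with hd'
    have hrnn : ∀ i, 0 ≤ r i := fun i => emod_nonneg' hn (d i - c)
    refine ⟨d', fun i => ?_, ?_⟩
    · rw [hd']
      dsimp only
      have h5 := npos hn
      have := hrnn i
      split
      · nlinarith
      · omega
    · set y : Fin n → ℤ := fun i => q i - (if i = (⟨0, by omega⟩ : Fin n) then t else 0) with hy
      have hsy : ∑ j, y j = -c := by
        rw [hy]
        dsimp only
        rw [Finset.sum_sub_distrib, Finset.sum_ite_eq' Finset.univ (⟨0, by omega⟩ : Fin n) (fun _ => t)]
        simp
        omega
      refine ⟨y, fun i => ?_⟩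
      rw [hsy, hy, hd']
      dsimp only
      have h6 := hqr i
      by_cases hi0 : i = (⟨0, by omega⟩ : Fin n)
      · rw [if_pos hi0, if_pos hi0]
        have hexp : (n:ℤ) * (q i - t) = (n:ℤ) * q i - (n:ℤ) * t := by ring
        omega
      · rw [if_neg hi0, if_neg hi0]
        have hexp : (n:ℤ) * (q i - 0) = (n:ℤ) * q i := by ring
        omega

lemma mem_N_of_deg_neg (hn : 2 ≤ n) {d : Fin n → ℤ} (h : deg d < 0) : d ∈ NKn n := by
  by_contra hc
  obtain ⟨c, hc'⟩ := (notN_iff hn d).mp hc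
  have : 0 ≤ ∑ j, ((d j - c) % (n:ℤ)) := Finset.sum_nonneg fun j _ => emod_nonneg' hn _
  omega

lemma N_mono (hn : 2 ≤ n) {d d' : Fin n → ℤ} (hle : ∀ i, d i ≤ d' i) (h : d' ∈ NKn n) :
    d ∈ NKn n := by
  by_contra hc
  obtain ⟨e, he, x, hx⟩ := (notN_unfold d).mp hc
  apply h
  refine ⟨fun i => e i + (d' i - d i), fun i => ?_, x, fun i => ?_⟩ <;> dsimp only
  · have h1 := hle i; have h2 := he i; omega
  · have h1 := hx i; omega

set_option maxHeartbeats 2000000 in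
lemma notN_iff_Sne (hn : 2 ≤ n) (d : Fin n → ℤ) :
    d ∉ NKn n ↔ (Sset hn d).Nonempty := by
  have hn' := npos hn
  constructor
  · intro h
    obtain ⟨c, hc⟩ := (notN_iff hn d).mp h
    have hr0 : 0 ≤ (d ⟨n-2, Nat.sub_lt_self (by norm_num) hn⟩ - c) % (n:ℤ) := emod_nonneg' hn _
    obtain ⟨i₀, hcast⟩ : ∃ i₀ : ℕ, (i₀:ℤ) = (d ⟨n-2, Nat.sub_lt_self (by norm_num) hn⟩ - c) % (n:ℤ) :=
      ⟨((d ⟨n-2, Nat.sub_lt_self (by norm_num) hn⟩ - c) % (n:ℤ)).toNat, Int.toNat_of_nonneg hr0⟩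
    have hq := Int.mul_ediv_add_emod (d ⟨n-2, Nat.sub_lt_self (by norm_num) hn⟩ - c) (n:ℤ)
    have hFf : Ff hn d (i₀:ℤ) = ∑ j ∈ Finset.univ.filter (fun j : Fin n => (j:ℕ) < n-2),
        ((d j - c) % (n:ℤ)) := by
      unfold Ff
      refine Finset.sum_congr rfl fun j _ => ?_
      rw [Int.emod_eq_emod_iff_emod_sub_eq_zero]
      have heq : d j - d ⟨n-2, Nat.sub_lt_self (by norm_num) hn⟩ + (i₀:ℤ) - (d j - c) =
          (n:ℤ) * (-((d ⟨n-2, Nat.sub_lt_self (by norm_num) hn⟩ - c) / (n:ℤ))) := by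
        linear_combination hcast + hq
      rw [heq, Int.mul_emod_right]
    have hsplit := Finset.sum_filter_add_sum_filter_not Finset.univ
      (fun j : Fin n => (j:ℕ) < n-2) (fun j => (d j - c) % (n:ℤ))
    have hνmem : (⟨n-2, Nat.sub_lt_self (by norm_num) hn⟩ : Fin n) ∈
        Finset.univ.filter (fun j : Fin n => ¬((j:ℕ) < n-2)) := by
      simp; omega
    have hsingle : (d ⟨n-2, Nat.sub_lt_self (by norm_num) hn⟩ - c) % (n:ℤ) ≤
        ∑ j ∈ Finset.univ.filter (fun j : Fin n => ¬((j:ℕ) < n-2)),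
        ((d j - c) % (n:ℤ)) :=
      Finset.single_le_sum (fun j _ => emod_nonneg' hn _) hνmem
    refine ⟨i₀, (mem_Sset hn).mpr ?_⟩
    rw [hFf]
    omega
  · rintro ⟨i, hi⟩
    rw [notN_iff hn d]
    have hiS := (mem_Sset hn).mp hi
    obtain ⟨c, hcdef⟩ : ∃ c : ℤ, c = d ⟨n-2, Nat.sub_lt_self (by norm_num) hn⟩ - (i:ℤ) := ⟨_, rfl⟩
    refine ⟨c, ?_⟩
    have hFf : ∑ j ∈ Finset.univ.filter (fun j : Fin n => (j:ℕ) < n-2),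
        ((d j - c) % (n:ℤ)) = Ff hn d (i:ℤ) := by
      unfold Ff
      refine Finset.sum_congr rfl fun j _ => ?_
      congr 1
      rw [hcdef]; ring
    have hsplit := Finset.sum_filter_add_sum_filter_not Finset.univ
      (fun j : Fin n => (j:ℕ) < n-2) (fun j => (d j - c) % (n:ℤ))
    have hpair : Finset.univ.filter (fun j : Fin n => ¬((j:ℕ) < n-2)) =
        {(⟨n-2, Nat.sub_lt_self (by norm_num) hn⟩ : Fin n), (⟨n-1, by omega⟩ : Fin n)} := by
      ext j
      have hj2 := j.2
      simp [Fin.ext_iff]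
      omega
    have hne : (⟨n-2, Nat.sub_lt_self (by norm_num) hn⟩ : Fin n) ≠ (⟨n-1, by omega⟩ : Fin n) := by
      intro h; have := congrArg Fin.val h; simp at this; omega
    have hsum2 : ∑ j ∈ Finset.univ.filter (fun j : Fin n => ¬((j:ℕ) < n-2)),
        ((d j - c) % (n:ℤ)) =
        ((d ⟨n-2, Nat.sub_lt_self (by norm_num) hn⟩ - c) % (n:ℤ)) + ((d ⟨n-1, by omega⟩ - c) % (n:ℤ)) := by
      rw [hpair, Finset.sum_pair hne]
    have hνterm : (d ⟨n-2, Nat.sub_lt_self (by norm_num) hn⟩ - c) % (n:ℤ) = (i:ℤ) % (n:ℤ) := by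
      congr 1
      rw [hcdef]; ring
    have himod : (i:ℤ) % (n:ℤ) ≤ (i:ℤ) := by
      have h3 : 0 ≤ (i:ℤ) / (n:ℤ) := Int.ediv_nonneg (by positivity) (by omega)
      have h4 := Int.mul_ediv_add_emod (i:ℤ) (n:ℤ)
      nlinarith
    have hw0 : 0 ≤ (d ⟨n-1, by omega⟩ - c) % (n:ℤ) := emod_nonneg' hn _
    have hw1 : (d ⟨n-1, by omega⟩ - c) % (n:ℤ) < (n:ℤ) := emod_lt' hn _
    -- divisibility of deg d - total
    have hdvd : (n:ℤ) ∣ deg d - ∑ j, ((d j - c) % (n:ℤ)) := by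
      have hterm : ∀ j : Fin n, d j - c - (d j - c) % (n:ℤ) = (n:ℤ) * ((d j - c) / (n:ℤ)) := by
        intro j
        have := Int.mul_ediv_add_emod (d j - c) (n:ℤ)
        omega
      have hsumeq : ∑ j, (d j - c - (d j - c) % (n:ℤ)) =
          (n:ℤ) * ∑ j, ((d j - c) / (n:ℤ)) := by
        rw [Finset.sum_congr rfl (fun j _ => hterm j), Finset.mul_sum]
      rw [Finset.sum_sub_distrib, Finset.sum_sub_distrib, Finset.sum_const,
        Finset.card_univ, Fintype.card_fin, nsmul_eq_mul] at hsumeq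
      refine ⟨(∑ j, ((d j - c) / (n:ℤ))) + c, ?_⟩
      have hexp : (n:ℤ) * ((∑ j, ((d j - c) / (n:ℤ))) + c) =
          (n:ℤ) * (∑ j, ((d j - c) / (n:ℤ))) + (n:ℤ) * c := by ring
      unfold deg
      omega
    obtain ⟨k, hk⟩ := hdvd
    have hmodeq := hνterm
    -- total = Ff i + i%n + w
    have htot : ∑ j, ((d j - c) % (n:ℤ)) =
        Ff hn d (i:ℤ) + (i:ℤ) % (n:ℤ) + (d ⟨n-1, by omega⟩ - c) % (n:ℤ) := by
      linarith [hsplit, hFf, hsum2, hνterm]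
    -- conclude
    have hlt : deg d - ∑ j, ((d j - c) % (n:ℤ)) > -(n:ℤ) := by
      linarith [htot, hiS, himod, hw0, hw1]
    rcases le_or_gt 0 k with hk0 | hk0
    · nlinarith
    · exfalso
      have : k ≤ -1 := by omega
      nlinarith

def L1 (d d' : Fin n → ℤ) : ℕ := ∑ i, (d i - d' i).natAbs

lemma L1_self (d : Fin n → ℤ) : L1 d d = 0 := by simp [L1]

lemma L1_tri (d d'' : Fin n → ℤ) (v : Fin n) : L1 d d'' ≤ 1 + L1 (d - stdB v) d'' := by
  have h1 : ∀ i, (d i - d'' i).natAbs ≤ (stdB v i).natAbs + ((d - stdB v) i - d'' i).natAbs := by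
    intro i
    simp only [Pi.sub_apply]
    omega
  have h2 : L1 d d'' ≤ ∑ i, ((stdB v i).natAbs + ((d - stdB v) i - d'' i).natAbs) :=
    Finset.sum_le_sum fun i _ => h1 i
  rw [Finset.sum_add_distrib] at h2
  have h3 : ∑ i, (stdB v i).natAbs = 1 := by
    have : ∀ i, (stdB v i).natAbs = if i = v then 1 else 0 := by
      intro i; simp [stdB]; split <;> simp
    rw [Finset.sum_congr rfl fun i _ => this i]
    simp
  rw [h3] at h2
  exact h2

lemma L1_dec {d d' : Fin n → ℤ} {v : Fin n} (hv : d' v < d v) :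
    L1 (d - stdB v) d' + 1 = L1 d d' := by
  unfold L1
  rw [← Finset.add_sum_erase _ _ (Finset.mem_univ v),
    ← Finset.add_sum_erase _ (fun i => (d i - d' i).natAbs) (Finset.mem_univ v)]
  have hrest : ∀ i ∈ Finset.univ.erase v,
      ((d - stdB v) i - d' i).natAbs = (d i - d' i).natAbs := by
    intro i hi
    rw [Finset.mem_erase] at hi
    simp [stdB, Pi.sub_apply, hi.1]
  rw [Finset.sum_congr rfl hrest]
  have hterm : ((d - stdB v) v - d' v).natAbs + 1 = (d v - d' v).natAbs := by
    have hv1 : (d - stdB v) v = d v - 1 := by simp [stdB]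
    rw [hv1]
    omega
  omega

lemma main (hn : 2 ≤ n) : ∀ k : ℕ, ∀ d : Fin n → ℤ, (deg d + 1).toNat ≤ k →
    (∃ d' ∈ NKn n, L1 d d' ≤ (Sset hn d).card) ∧
    (∀ d' ∈ NKn n, (Sset hn d).card ≤ L1 d d') := by
  intro k
  induction k with
  | zero =>
    intro d hd
    have hneg : deg d < 0 := by omega
    have hS : Sset hn d = ∅ := by
      unfold Sset
      have h0 : (deg d + 1).toNat = 0 := by omega
      rw [h0]
      simp
    refine ⟨⟨d, mem_N_of_deg_neg hn hneg, by rw [L1_self]; exact Nat.zero_le _⟩, ?_⟩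
    intro d' _
    rw [hS]
    simp
  | succ k ih =>
    intro d hd
    by_cases hS : (Sset hn d).Nonempty
    · have hdeg0 : 0 ≤ deg d := by
        obtain ⟨i, hi⟩ := hS
        have h1 := (mem_Sset hn).mp hi
        have h2 := Ff_nonneg hn d (i:ℤ)
        have h3 : (0:ℤ) ≤ (i:ℤ) := Int.ofNat_nonneg i
        omega
      have hdN : d ∉ NKn n := (notN_iff_Sne hn d).mpr hS
      have hdd : ∀ v : Fin n, (deg (d - stdB v) + 1).toNat ≤ k := by
        intro v; rw [deg_sub_stdB]; omega
      constructor
      · obtain ⟨v, hv⟩ := B2 hn d hS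
        obtain ⟨⟨d', hd'N, hL⟩, -⟩ := ih (d - stdB v) (hdd v)
        refine ⟨d', hd'N, ?_⟩
        have := L1_tri d d' v
        omega
      · intro d' hd'N
        have hex : ∃ v, d' v < d v := by
          by_contra hno
          push_neg at hno
          exact hdN (N_mono hn hno hd'N)
        obtain ⟨v, hv⟩ := hex
        obtain ⟨-, hlow⟩ := ih (d - stdB v) (hdd v)
        have h1 := hlow d' hd'N
        have h2 := B1 hn d v
        have h3 := L1_dec hv
        omega
    · rw [Finset.not_nonempty_iff_eq_empty] at hS
      have hdN : d ∈ NKn n := by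
        by_contra hc
        obtain ⟨i, hi⟩ := (notN_iff_Sne hn d).mp hc
        rw [hS] at hi
        exact absurd hi (Finset.notMem_empty i)
      refine ⟨⟨d, hdN, by rw [L1_self]; exact Nat.zero_le _⟩, ?_⟩
      intro d' _
      rw [hS]
      simp

end CLB

theorem stmt19 {n : ℕ} (hn : 2 ≤ n) (d : Fin n → ℤ) :
    rBN n d = -1 +
      (((Finset.range (deg d + 1).toNat).filter (fun i : ℕ =>
        (∑ j ∈ Finset.univ.filter (fun j : Fin n => (j : ℕ) < n - 2),
          ((d j - d ⟨n - 2, by omega⟩ + (i : ℤ)) % n)) ≤ deg d - (i : ℤ))).card : ℤ) := by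
  obtain ⟨⟨d₀, hd₀N, hd₀⟩, hlow⟩ := CLB.main hn (deg d + 1).toNat d le_rfl
  have hmem : CLB.L1 d d₀ ∈ {k : ℕ | ∃ d' ∈ NKn n, ∑ i, (d i - d' i).natAbs = k} :=
    ⟨d₀, hd₀N, rfl⟩
  have hdist : distTo (NKn n) d = (CLB.Sset hn d).card := by
    unfold distTo
    apply le_antisymm
    · exact le_trans (Nat.sInf_le hmem) hd₀
    · apply le_csInf ⟨CLB.L1 d d₀, hmem⟩
      rintro k ⟨d', hd'N, rfl⟩
      exact hlow d' hd'N
  have hSeq : CLB.Sset hn d = (Finset.range (deg d + 1).toNat).filter (fun i : ℕ =>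
        (∑ j ∈ Finset.univ.filter (fun j : Fin n => (j : ℕ) < n - 2),
          ((d j - d ⟨n - 2, by omega⟩ + (i : ℤ)) % n)) ≤ deg d - (i : ℤ)) := rfl
  unfold rBN
  rw [hdist, hSeq]
  ring
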